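/- Let α > 1 and define g_α : ℂ → ℂ by g_α(z) = |z|^{α−1} z (with g_α(0) = 0). Then g_α is differentiable over ℝ (viewing ℂ as the real normed space ℝ²) at every point z ∈ ℂ; at z = 0 its real Fréchet derivative is 0, and at z ≠ 0 its real Fréchet derivative is the real-linear map h ↦ ((α+1)/2) |z|^{α−1} h + ((α−1)/2) |z|^{α−3} z² · conj(h). -/

import Mathlib

open Complex Asymptotics Filter Topology

lemma aux_zero (α : ℝ) (hα : 1 < α) :
    HasFDerivAt (fun w : ℂ => ((‖w‖ ^ (α - 1) : ℝ) : ℂ) * w)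
      (0 : ℂ →L[ℝ] ℂ) 0 := by
  rw [hasFDerivAt_iff_isLittleO_nhds_zero]
  simp only [map_zero, zero_add, map_zero, ContinuousLinearMap.zero_apply, mul_zero,
    sub_zero, Real.zero_rpow (by linarith : α - 1 ≠ 0)]
  rw [Asymptotics.isLittleO_iff]
  intro c hc
  have ht : Tendsto (fun h : ℂ => ‖h‖ ^ (α - 1)) (𝓝 0) (𝓝 0) := by
    have : Tendsto (fun x : ℝ => x ^ (α - 1)) (𝓝 0) (𝓝 (0 ^ (α - 1))) :=
      (Real.continuousAt_rpow_const 0 (α - 1) (Or.inr (by linarith))).tendsto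
    rw [Real.zero_rpow (by linarith : α - 1 ≠ 0)] at this
    exact this.comp (by simpa using (continuous_norm (E := ℂ)).tendsto 0)
  filter_upwards [ht (Metric.ball_mem_nhds 0 hc)] with w hw
  simp only [Set.mem_preimage, Metric.mem_ball, dist_zero_right, Real.norm_eq_abs] at hw
  have h1 : |‖w‖ ^ (α - 1)| = ‖w‖ ^ (α - 1) :=
    abs_of_nonneg (Real.rpow_nonneg (norm_nonneg w) _)
  calc ‖((‖w‖ ^ (α - 1) : ℝ) : ℂ) * w‖
      = ‖w‖ ^ (α - 1) * ‖w‖ := by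
        simp [norm_mul, Complex.norm_real, Real.norm_eq_abs, h1]
    _ ≤ c * ‖w‖ := by
        apply mul_le_mul_of_nonneg_right _ (norm_nonneg w)
        rw [h1] at hw; linarith

lemma aux_key (α : ℝ) (hα : 1 < α) (z : ℂ) (hz : z ≠ 0) :
    HasFDerivAt (fun w : ℂ => ((‖w‖ ^ (α - 1) : ℝ) : ℂ) * w)
      ((((α + 1) / 2 * ‖z‖ ^ (α - 1) : ℝ) : ℂ) • ContinuousLinearMap.id ℝ ℂ
        + (((((α - 1) / 2 * ‖z‖ ^ (α - 3) : ℝ) : ℂ) * z ^ 2) •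
          (Complex.conjCLE : ℂ →L[ℝ] ℂ))) z := by
  have hg : (fun w : ℂ => ((‖w‖ ^ (α - 1) : ℝ) : ℂ) * w)
      = fun w : ℂ => ((Complex.normSq w ^ ((α - 1) / 2) : ℝ) : ℂ) * w := by
    funext w
    congr 2
    rw [Complex.normSq_eq_norm_sq, ← Real.rpow_natCast (‖w‖) 2,
      ← Real.rpow_mul (norm_nonneg w),
      show ((2:ℕ) : ℝ) * ((α - 1) / 2) = α - 1 by push_cast; ring]
  rw [hg]
  have hd1 : HasFDerivAt Complex.normSq
      ((2 * z.re) • (Complex.reCLM : ℂ →L[ℝ] ℝ) + (2 * z.im) • (Complex.imCLM : ℂ →L[ℝ] ℝ)) z := by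
    have h1 : HasFDerivAt (fun w : ℂ => w.re * w.re + w.im * w.im)
        ((z.re • (Complex.reCLM : ℂ →L[ℝ] ℝ) + z.re • (Complex.reCLM : ℂ →L[ℝ] ℝ))
          + (z.im • (Complex.imCLM : ℂ →L[ℝ] ℝ) + z.im • (Complex.imCLM : ℂ →L[ℝ] ℝ))) z :=
      ((Complex.reCLM.hasFDerivAt.mul Complex.reCLM.hasFDerivAt).add
        (Complex.imCLM.hasFDerivAt.mul Complex.imCLM.hasFDerivAt))
    have he : (fun w : ℂ => w.re * w.re + w.im * w.im) = Complex.normSq := by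
      funext w; simp [Complex.normSq_apply]
    rw [he] at h1
    convert h1 using 1
    ext h <;> simp <;> ring
  have hz' : Complex.normSq z ≠ 0 := by simpa [Complex.normSq_eq_zero] using hz
  have hf := hd1.rpow_const (p := (α - 1) / 2) (Or.inl hz')
  have hof := Complex.ofRealCLM.hasFDerivAt.comp z hf
  have hmul := hof.mul' (hasFDerivAt_id z)
  have hL : (((α + 1) / 2 * ‖z‖ ^ (α - 1) : ℝ) : ℂ) • ContinuousLinearMap.id ℝ ℂ
        + (((((α - 1) / 2 * ‖z‖ ^ (α - 3) : ℝ) : ℂ) * z ^ 2) •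
          (Complex.conjCLE : ℂ →L[ℝ] ℂ))
      = ((⇑Complex.ofRealCLM ∘ fun x => Complex.normSq x ^ ((α - 1) / 2)) z •
          ContinuousLinearMap.id ℝ ℂ +
        (Complex.ofRealCLM.comp (((α - 1) / 2 * Complex.normSq z ^ ((α - 1) / 2 - 1)) •
          ((2 * z.re) • (Complex.reCLM : ℂ →L[ℝ] ℝ) + (2 * z.im) • (Complex.imCLM : ℂ →L[ℝ] ℝ)))).smulRight
          (id z)) := by
    refine ContinuousLinearMap.ext fun h => ?_
    simp only [ContinuousLinearMap.add_apply, ContinuousLinearMap.smul_apply,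
      ContinuousLinearMap.id_apply, ContinuousLinearMap.coe_comp', Function.comp_apply,
      ContinuousLinearMap.smulRight_apply, ContinuousLinearMap.coe_smul', Pi.smul_apply,
      Complex.ofRealCLM_apply, Complex.reCLM_apply, Complex.imCLM_apply,
      ContinuousLinearEquiv.coe_coe, Complex.conjCLE_apply, smul_eq_mul, id_eq]
    set r := ‖z‖ with hr
    have hr0 : 0 < r := norm_pos_iff.mpr hz
    have eN : Complex.normSq z = r ^ (2 : ℕ) := Complex.normSq_eq_norm_sq z
    have e1 : Complex.normSq z ^ ((α - 1) / 2) = r ^ (α - 1) := by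
      rw [eN, ← Real.rpow_natCast r 2, ← Real.rpow_mul hr0.le,
        show ((2:ℕ) : ℝ) * ((α - 1) / 2) = α - 1 by push_cast; ring]
    have e2 : Complex.normSq z ^ ((α - 1) / 2 - 1) = r ^ (α - 3) := by
      rw [eN, ← Real.rpow_natCast r 2, ← Real.rpow_mul hr0.le,
        show ((2:ℕ) : ℝ) * ((α - 1) / 2 - 1) = α - 3 by push_cast; ring]
    rw [e1, e2]
    have hzz : z * (starRingEnd ℂ) z = ((Complex.normSq z : ℝ) : ℂ) := Complex.mul_conj z
    have h3 : ((r ^ (α - 3) * Complex.normSq z : ℝ) : ℂ) = ((r ^ (α - 1) : ℝ) : ℂ) := by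
      rw [eN, ← Real.rpow_natCast r 2, ← Real.rpow_add hr0,
        show α - 3 + ((2:ℕ) : ℝ) = α - 1 by push_cast; ring]
    have h2c : (((z.re * h.re + z.im * h.im : ℝ)) : ℂ)
        = ((starRingEnd ℂ) z * h + z * (starRingEnd ℂ) h) / 2 := by
      simp [Complex.ext_iff]; ring
    push_cast at h3 h2c ⊢
    linear_combination (-2 * ((↑α - 1) / 2 * (↑(r ^ (α - 3)) : ℂ)) * z) * h2c
      + (-((↑α - 1) / 2 * (↑(r ^ (α - 3)) : ℂ)) * h) * hzz
      + (-((↑α - 1) / 2) * h) * h3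
  rw [hL]
  exact hmul


/-- Real (Fréchet) differentiability of the power nonlinearity `g_α(z) = |z|^{α−1} z`
(`α > 1`), viewing `ℂ` as a real normed space: `g_α` is differentiable over `ℝ`
everywhere, its derivative at `0` is `0`, and at `z ≠ 0` its derivative is
`h ↦ ((α+1)/2) |z|^{α−1} h + ((α−1)/2) |z|^{α−3} z² conj(h)`. -/
theorem stmt8 (α : ℝ) (hα : 1 < α) :
    (∀ z : ℂ, DifferentiableAt ℝ
        (fun w : ℂ => ((‖w‖ ^ (α - 1) : ℝ) : ℂ) * w) z) ∧
    fderiv ℝ (fun w : ℂ => ((‖w‖ ^ (α - 1) : ℝ) : ℂ) * w) 0 = 0 ∧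
    ∀ z : ℂ, z ≠ 0 → ∀ h : ℂ,
      fderiv ℝ (fun w : ℂ => ((‖w‖ ^ (α - 1) : ℝ) : ℂ) * w) z h
        = (((α + 1) / 2 * ‖z‖ ^ (α - 1) : ℝ) : ℂ) * h
          + (((α - 1) / 2 * ‖z‖ ^ (α - 3) : ℝ) : ℂ) * z ^ 2
            * (starRingEnd ℂ) h := by
  refine ⟨fun z => ?_, (aux_zero α hα).fderiv, fun z hz h => ?_⟩
  · rcases eq_or_ne z 0 with rfl | hz
    · exact (aux_zero α hα).differentiableAt
    · exact (aux_key α hα z hz).differentiableAt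
  · rw [(aux_key α hα z hz).fderiv]
    simp only [ContinuousLinearMap.add_apply, ContinuousLinearMap.smul_apply,
      ContinuousLinearMap.id_apply, ContinuousLinearEquiv.coe_coe, Complex.conjCLE_apply,
      smul_eq_mul]
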